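/- For any rational p/q > 2 with q not dividing p, the power thickness of the circular complete graph K_{p/q} is strictly greater than 1. -/

import Mathlib

structure SGraph where
  V : Type
  Adj : V → V → Prop
  symm : ∀ u v, Adj u v → Adj v u

namespace SGraph

/-- There is a walk of length exactly `n` from `u` to `v`. -/
def walkLen (G : SGraph) : ℕ → G.V → G.V → Prop
  | 0, u, v => u = v
  | n+1, u, v => ∃ w, G.Adj u w ∧ G.walkLen n w v

theorem walkLen_concat (G : SGraph) : ∀ (n : ℕ) (u v w : G.V),
    G.walkLen n u v → G.Adj v w → G.walkLen (n+1) u w := by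
  intro n
  induction n with
  | zero =>
      intro u v w h hadj
      cases h
      exact ⟨w, hadj, rfl⟩
  | succ n ih =>
      rintro u v w ⟨x, hux, hxv⟩ hadj
      exact ⟨x, hux, ih x v w hxv hadj⟩

theorem walkLen_symm (G : SGraph) : ∀ (n : ℕ) (u v : G.V),
    G.walkLen n u v → G.walkLen n v u := by
  intro n
  induction n with
  | zero => intro u v h; exact h.symm
  | succ n ih =>
      rintro u v ⟨w, huw, hwv⟩
      exact G.walkLen_concat n v w u (ih w v hwv) (G.symm u w huw)

/-- The `k`-th power of a graph: same vertices, adjacency = existence of a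
walk of length exactly `k` (loops allowed). -/
def pow (G : SGraph) (k : ℕ) : SGraph where
  V := G.V
  Adj u v := G.walkLen k u v
  symm := G.walkLen_symm k

/-- Existence of a graph homomorphism. -/
def homTo (G H : SGraph) : Prop :=
  ∃ f : G.V → H.V, ∀ u v, G.Adj u v → H.Adj (f u) (f v)

/-- The `(2s+1)`-subdivision `S_{2s+1}(G)`: every edge is replaced by a path
of length `2s+1`.  Following the paper's notation, the ordered pair `(u,v)`
(with `u ~ v`) carries the `s` inner vertices `(uv)_1, …, (uv)_s`. -/
def subdiv (G : SGraph) (s : ℕ) : SGraph where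
  V := G.V ⊕ ({p : G.V × G.V // G.Adj p.1 p.2} × Fin s)
  Adj x y :=
    match x, y with
    | Sum.inl u, Sum.inl v => s = 0 ∧ G.Adj u v
    | Sum.inl u, Sum.inr (e, k) => u = e.1.2 ∧ (k : ℕ) = s - 1
    | Sum.inr (e, k), Sum.inl u => u = e.1.2 ∧ (k : ℕ) = s - 1
    | Sum.inr (e, k), Sum.inr (e', l) =>
        e'.1.1 = e.1.2 ∧ e'.1.2 = e.1.1 ∧
        ((k : ℕ) + (l : ℕ) + 2 = s ∨ (k : ℕ) + (l : ℕ) + 2 = s + 1)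
  symm := by
    rintro (u | ⟨e, k⟩) (v | ⟨e', l⟩) h
    · exact ⟨h.1, G.symm _ _ h.2⟩
    · exact h
    · exact h
    · obtain ⟨h1, h2, h3⟩ := h
      exact ⟨h2.symm, h1.symm, by omega⟩

/-- `q < og(G)`: the rational `q` is smaller than the odd girth of `G`
(the length of a shortest odd closed walk; vacuously true if `G` is bipartite). -/
def ltOddGirth (G : SGraph) (q : ℚ) : Prop :=
  ∀ n : ℕ, Odd n → (∃ v, G.walkLen n v v) → q < (n : ℚ)

/-- A graph is non-bipartite iff it contains an odd closed walk. -/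
def Nonbipartite (G : SGraph) : Prop :=
  ∃ (n : ℕ) (v : G.V), Odd n ∧ G.walkLen n v v

/-- The odd girth, as an extended natural number (`⊤` for bipartite graphs). -/
noncomputable def oddGirth (G : SGraph) : ℕ∞ :=
  sInf {N : ℕ∞ | ∃ n : ℕ, N = (n : ℕ∞) ∧ Odd n ∧ ∃ v, G.walkLen n v v}

/-- The complete graph on `m` vertices. -/
def completeGraph (m : ℕ) : SGraph :=
  ⟨Fin m, fun u v => u ≠ v, fun _ _ h => h.symm⟩

/-- The chromatic number: least `m` such that `G` maps homomorphically to `K_m`. -/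
noncomputable def chromatic (G : SGraph) : ℕ :=
  sInf {m : ℕ | G.homTo (completeGraph m)}

/-- The `i`-th power thickness
`θ_i(G) = sup { (2r+1)/(2s+1) | χ(G^{(2r+1)/(2s+1)}) ≤ χ(G)+i, (2r+1)/(2s+1) < og(G) }`. -/
noncomputable def powerThickness (G : SGraph) (i : ℤ) : ℝ :=
  sSup {x : ℝ | ∃ r s : ℕ, x = (2*(r:ℝ)+1)/(2*(s:ℝ)+1) ∧
    ((((G.subdiv s).pow (2*r+1)).chromatic : ℤ) ≤ (G.chromatic : ℤ) + i) ∧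
    G.ltOddGirth ((2*(r:ℚ)+1)/(2*(s:ℚ)+1))}

/-- The graph `H^{-1/(2r+1)}`. -/
def negPow (H : SGraph) (r : ℕ) : SGraph where
  V := {A : Fin (r+1) → Set H.V //
        (∃ v, A 0 = {v}) ∧
        ∀ i : Fin (r+1), (A i).Nonempty ∧ A i ⊆ {u | ∃ v ∈ A 0, H.walkLen i v u}}
  Adj A B :=
    (∀ i j : Fin (r+1), (j : ℕ) = (i : ℕ) + 1 → A.1 i ⊆ B.1 j ∧ B.1 i ⊆ A.1 j) ∧
    ∀ j : Fin (r+1), ∀ a ∈ A.1 j, ∀ b ∈ B.1 j, H.Adj a b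
  symm := by
    rintro A B ⟨h1, h2⟩
    exact ⟨fun i j hij => ⟨(h1 i j hij).2, (h1 i j hij).1⟩,
           fun j b hb a ha => H.symm _ _ (h2 j a ha b hb)⟩

/-- The circular complete graph `K_{n/d}`. -/
def circGraph (n d : ℕ) : SGraph where
  V := Fin n
  Adj u v := (d : ℤ) ≤ |(u : ℤ) - (v : ℤ)| ∧ |(u : ℤ) - (v : ℤ)| ≤ (n : ℤ) - d
  symm := by
    intro u v h
    rwa [abs_sub_comm]

/-- The circular chromatic number, as a real number. -/
noncomputable def circChrom (G : SGraph) : ℝ :=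
  sInf {x : ℝ | ∃ n d : ℕ, 0 < d ∧ 2 * d ≤ n ∧ Nat.gcd n d = 1 ∧
    x = (n : ℝ) / (d : ℝ) ∧ G.homTo (circGraph n d)}

/-- The cycle on `m` vertices. -/
def cycleGraph (m : ℕ) : SGraph :=
  ⟨ZMod m, fun i j => i = j + 1 ∨ j = i + 1, fun _ _ h => h.symm⟩

/-- Graph isomorphism. -/
def Isom (G H : SGraph) : Prop :=
  ∃ f : G.V ≃ H.V, ∀ u v, G.Adj u v ↔ H.Adj (f u) (f v)

/-- The helical graph `H(m,n,k)`. -/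
def helical (m n k : ℕ) : SGraph where
  V := {A : Fin k → Set (Fin m) //
        (∀ h : 0 < k, (A ⟨0, h⟩).ncard = n) ∧
        (∀ i, n ≤ (A i).ncard) ∧
        (∀ i : Fin k, ∀ h : (i : ℕ) + 1 < k, A i ∩ A ⟨(i : ℕ) + 1, h⟩ = ∅) ∧
        (∀ i : Fin k, ∀ h : (i : ℕ) + 2 < k, A i ⊆ A ⟨(i : ℕ) + 2, h⟩)}
  Adj A B :=
    (∀ i, A.1 i ∩ B.1 i = ∅) ∧
    (∀ i : Fin k, ∀ h : (i : ℕ) + 1 < k,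
      A.1 i ⊆ B.1 ⟨(i : ℕ) + 1, h⟩ ∧ B.1 i ⊆ A.1 ⟨(i : ℕ) + 1, h⟩)
  symm := by
    rintro A B ⟨h1, h2⟩
    refine ⟨fun i => ?_, fun i h => ⟨(h2 i h).2, (h2 i h).1⟩⟩
    rw [Set.inter_comm]
    exact h1 i

/-- A graph with chromatic number `k` is colorful if every proper `k`-coloring
admits a (nonempty) induced subgraph all of whose vertices see all `k` colors in
their closed neighborhood. -/
def Colorful (G : SGraph) : Prop :=
  ∀ c : G.V → Fin G.chromatic, (∀ u v, G.Adj u v → c u ≠ c v) →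
    ∃ S : Set G.V, S.Nonempty ∧
      ∀ v ∈ S, ∀ col : Fin G.chromatic,
        ∃ u ∈ S, (u = v ∨ G.Adj v u) ∧ c u = col

end SGraph

open SGraph

namespace Aux

lemma walkLen_of_fun (G : SGraph) (g : ℕ → G.V) :
    ∀ n, (∀ i, i < n → G.Adj (g i) (g (i+1))) → G.walkLen n (g 0) (g n) := by
  intro n
  induction n with
  | zero => intro _; rfl
  | succ n ih =>
      intro h
      exact G.walkLen_concat n (g 0) (g n) (g (n+1))
        (ih fun i hi => h i (by omega)) (h n (by omega))

lemma walkLen_map {G H : SGraph} (f : G.V → H.V)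
    (hf : ∀ u v, G.Adj u v → H.Adj (f u) (f v)) :
    ∀ n u v, G.walkLen n u v → H.walkLen n (f u) (f v) := by
  intro n
  induction n with
  | zero => intro u v h; exact congrArg f h
  | succ n ih => rintro u v ⟨w, h1, h2⟩; exact ⟨f w, hf _ _ h1, ih _ _ h2⟩

lemma complete2_walk : ∀ (n : ℕ) (u v : (completeGraph 2).V),
    (completeGraph 2).walkLen n u v → (u = v ↔ Even n) := by
  intro n
  induction n with
  | zero =>
      intro u v h
      simp only [walkLen] at h
      simp [h]
  | succ n ih =>
      rintro u v ⟨w, h1, h2⟩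
      have hwv := ih w v h2
      have h1' : u ≠ w := h1
      have hu := u.isLt; have hv := v.isLt; have hw := w.isLt
      have h1v : u.val ≠ w.val := fun h => h1' (Fin.ext h)
      erw [Nat.even_add_one, ← hwv, Fin.ext_iff, Fin.ext_iff]
      have : (completeGraph 2).V = Fin 2 := rfl
      omega

lemma circ_adj_iff (p q : ℕ) (a b : Fin p) :
    (circGraph p q).Adj a b ↔ ((q:ℤ) ≤ |(a.val:ℤ) - (b.val:ℤ)| ∧
      |(a.val:ℤ) - (b.val:ℤ)| ≤ (p:ℤ) - q) := Iff.rfl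

lemma mod_two_cases (p x : ℕ) (hp : 0 < p) (h : x < 2*p) :
    x % p = x ∨ (x % p = x - p ∧ p ≤ x) := by
  rcases Nat.lt_or_ge x p with h1 | h1
  · exact Or.inl (Nat.mod_eq_of_lt h1)
  · right
    refine ⟨?_, h1⟩
    rw [Nat.mod_eq_sub_mod h1, Nat.mod_eq_of_lt (by omega)]

lemma circ_adj_shift (p q : ℕ) (hq : 0 < q) (hpq : 2*q < p) (x d : ℕ)
    (hd1 : q ≤ d) (hd2 : d + q ≤ p) :
    (circGraph p q).Adj ⟨x % p, Nat.mod_lt _ (by omega)⟩ ⟨(x+d) % p, Nat.mod_lt _ (by omega)⟩ := by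
  have hp : 0 < p := by omega
  have hu : x % p < p := Nat.mod_lt _ hp
  have hv : (x + d) % p < p := Nat.mod_lt _ hp
  have hmm : (x % p + d) % p = (x + d) % p := Nat.mod_add_mod x p d
  have hcases := mod_two_cases p (x % p + d) hp (by omega)
  rw [hmm] at hcases
  rw [circ_adj_iff]
  show (q:ℤ) ≤ |((x % p : ℕ):ℤ) - (((x+d) % p : ℕ):ℤ)| ∧
    |((x % p : ℕ):ℤ) - (((x+d) % p : ℕ):ℤ)| ≤ (p:ℤ) - q
  constructor
  · rw [le_abs]; omega
  · rw [abs_le]; omega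

lemma circ_odd_walk (p q : ℕ) (hq : 0 < q) (hpq : 2*q < p) :
    ∃ v : (circGraph p q).V, (circGraph p q).walkLen (2*p+1) v v := by
  have hp : 0 < p := by omega
  set c := p + q + 1 with hc
  set g : ℕ → (circGraph p q).V := fun i => ⟨(i*q + (i - c)) % p, Nat.mod_lt _ hp⟩ with hg
  have hend : g (2*p+1) = g 0 := by
    apply Fin.ext
    show ((2*p+1)*q + ((2*p+1) - c)) % p = (0*q + (0 - c)) % p
    have h1 : (2*p+1) - c = p - q := by omega
    have h2 : (2*p+1)*q + (p - q) = p*(2*q+1) := by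
      have hqp : q ≤ p := by omega
      zify [hqp]; ring
    rw [h1, h2]
    simp [Nat.mul_mod_right]
  have hwalk : (circGraph p q).walkLen (2*p+1) (g 0) (g (2*p+1)) := by
    apply walkLen_of_fun
    intro i hi
    by_cases hic : i + 1 ≤ c
    · have he : (i+1)*q + ((i+1) - c) = (i*q + (i - c)) + q := by
        have h1 : (i+1)*q = i*q + q := by ring
        omega
      have hgr : g (i+1) = ⟨((i*q + (i - c)) + q) % p, Nat.mod_lt _ hp⟩ := by
        apply Fin.ext
        show ((i+1)*q + ((i+1) - c)) % p = _
        rw [he]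
      rw [hgr]
      exact circ_adj_shift p q hq hpq _ q le_rfl (by omega)
    · have he : (i+1)*q + ((i+1) - c) = (i*q + (i - c)) + (q+1) := by
        have h1 : (i+1)*q = i*q + q := by ring
        omega
      have hgr : g (i+1) = ⟨((i*q + (i - c)) + (q+1)) % p, Nat.mod_lt _ hp⟩ := by
        apply Fin.ext
        show ((i+1)*q + ((i+1) - c)) % p = _
        rw [he]
      rw [hgr]
      exact circ_adj_shift p q hq hpq _ (q+1) (by omega) (by omega)
  rw [hend] at hwalk
  exact ⟨g 0, hwalk⟩

end Aux
namespace Aux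

lemma circ_indep (p q : ℕ) (hq : 0 < q) (hpq : 2*q < p) (h3 : 3*q ≤ p + 1)
    (S : Finset (Fin p)) (hS : ∀ u ∈ S, ∀ v ∈ S, ¬ (circGraph p q).Adj u v) :
    S.card ≤ q := by
  rcases S.eq_empty_or_nonempty with rfl | ⟨a, ha⟩
  · simp
  classical
  set ℓ : Fin p → ℤ := fun u =>
    if |(u.val:ℤ) - (a.val:ℤ)| < q then (u.val:ℤ) - a.val
    else if (a.val:ℤ) < u.val then (u.val:ℤ) - a.val - p else (u.val:ℤ) - a.val + p
    with hℓ
  have hform : ∀ u : Fin p, ℓ u = (u.val:ℤ) - a.val ∨ ℓ u = (u.val:ℤ) - a.val - p ∨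
      ℓ u = (u.val:ℤ) - a.val + p := by
    intro u
    simp only [hℓ]
    split_ifs <;> tauto
  have hsmall : ∀ u ∈ S, -(q:ℤ) < ℓ u ∧ ℓ u < q := by
    intro u hu
    have hna := hS u hu a ha
    rw [circ_adj_iff] at hna
    have hu1 := u.isLt; have ha1 := a.isLt
    have habs := abs_choice ((u.val:ℤ) - (a.val:ℤ))
    have habs0 := abs_nonneg ((u.val:ℤ) - (a.val:ℤ))
    simp only [hℓ]
    split_ifs with h1 h2 <;> omega
  have hpair : ∀ u ∈ S, ∀ v ∈ S, ℓ u - ℓ v < q ∧ ℓ v - ℓ u < q := by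
    intro u hu v hv
    have hna := hS u hu v hv
    rw [circ_adj_iff] at hna
    have hu1 := u.isLt; have hv1 := v.isLt
    have habs := abs_choice ((u.val:ℤ) - (v.val:ℤ))
    have habs0 := abs_nonneg ((u.val:ℤ) - (v.val:ℤ))
    have h1 := hform u; have h2 := hform v
    have h3 := hsmall u hu; have h4 := hsmall v hv
    omega
  have hinj : Set.InjOn ℓ S := by
    intro u hu v hv he
    have h1 := hform u; have h2 := hform v
    have hu1 := u.isLt; have hv1 := v.isLt
    apply Fin.ext
    omega
  obtain ⟨b, hb, hmin⟩ := S.exists_min_image ℓ ⟨a, ha⟩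
  have hsub : S.image ℓ ⊆ Finset.Icc (ℓ b) (ℓ b + (q - 1 : ℤ)) := by
    intro z hz
    obtain ⟨u, hu, rfl⟩ := Finset.mem_image.1 hz
    rw [Finset.mem_Icc]
    have := hmin u hu
    have := hpair u hu b hb
    omega
  calc S.card = (S.image ℓ).card := (Finset.card_image_of_injOn hinj).symm
    _ ≤ (Finset.Icc (ℓ b) (ℓ b + (q - 1 : ℤ))).card := Finset.card_le_card hsub
    _ ≤ q := by rw [Int.card_Icc]; omega

lemma circ_chrom_lower (p q : ℕ) (hq : 0 < q) (hpq : 2*q < p) (hnd : ¬ q ∣ p) :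
    ∀ m : ℕ, (circGraph p q).homTo (completeGraph m) → p / q + 1 ≤ m := by
  rintro m ⟨f, hf⟩
  classical
  have hp : 0 < p := by omega
  by_cases h3 : 3*q ≤ p + 1
  · -- counting via independence number
    have hfib : ∀ a ∈ (Finset.univ : Finset (Fin p)).image f,
        ((Finset.univ : Finset (Fin p)).filter (fun x => f x = a)).card ≤ q := by
      intro a _
      apply circ_indep p q hq hpq h3
      intro u hu v hv hadj
      have h1 := (Finset.mem_filter.1 hu).2
      have h2 := (Finset.mem_filter.1 hv).2
      exact hf u v hadj (h1.trans h2.symm)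
    have hcard := Finset.card_le_mul_card_image (s := (Finset.univ : Finset (Fin p)))
      (f := f) q hfib
    have h4 : ((Finset.univ : Finset (Fin p)).image f).card ≤ m := by
      calc _ ≤ (Finset.univ : Finset (Fin m)).card := Finset.card_le_card (Finset.subset_univ _)
        _ = m := by simp
    have h8 : (Finset.univ : Finset (Fin p)).card = p := by simp
    erw [h8] at hcard
    have h5 : p ≤ q * m := hcard.trans (Nat.mul_le_mul_left q h4)
    have h7 : p < m * q := by
      have e : q * m = m * q := Nat.mul_comm q m
      rcases Nat.lt_or_ge p (m*q) with h | h
      · exact h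
      · exfalso; exact hnd ⟨m, by omega⟩
    have := (Nat.div_lt_iff_lt_mul hq).2 h7
    omega
  · -- here p/q = 2, need m ≥ 3
    have hdivle : p / q < 3 := (Nat.div_lt_iff_lt_mul hq).2 (by omega)
    have h3m : 3 ≤ m := by
      match m, f, hf with
      | 0, f, hf => exact Fin.elim0 (f ⟨0, hp⟩)
      | 1, f, hf =>
          exfalso
          have hadj : (circGraph p q).Adj ⟨0, hp⟩ ⟨q, by omega⟩ := by
            rw [circ_adj_iff]
            show (q:ℤ) ≤ |((0:ℕ):ℤ) - ((q:ℕ):ℤ)| ∧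
              |((0:ℕ):ℤ) - ((q:ℕ):ℤ)| ≤ (p:ℤ) - q
            constructor
            · rw [le_abs]; push_cast; omega
            · rw [abs_le]; push_cast; omega
          exact hf _ _ hadj (Subsingleton.elim _ _)
      | 2, f, hf =>
          exfalso
          obtain ⟨v, hw⟩ := circ_odd_walk p q hq hpq
          have hw2 := walkLen_map f hf _ _ _ hw
          have heven := (complete2_walk _ _ _ hw2).1 rfl
          obtain ⟨t, ht⟩ := heven
          omega
      | (n+3), f, hf => omega
    omega

end Aux
namespace Aux

def dd (p : ℕ) (a b : Fin p) : ℕ := (b.val + p - a.val) % p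

lemma dd_spec (p q : ℕ) (hq : 0 < q) (hpq : 2*q < p) (a b : Fin p)
    (hab : (circGraph p q).Adj a b) :
    q ≤ dd p a b ∧ dd p a b + q ≤ p ∧ (a.val + dd p a b) % p = b.val ∧
      dd p a b + dd p b a = p := by
  have hp : 0 < p := by omega
  obtain ⟨h1, h2⟩ := (circ_adj_iff p q a b).1 hab
  have ha := a.isLt; have hb := b.isLt
  have habs := abs_choice ((a.val:ℤ) - (b.val:ℤ))
  have habs0 := abs_nonneg ((a.val:ℤ) - (b.val:ℤ))
  have k1 := mod_two_cases p (b.val + p - a.val) hp (by omega)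
  have k2 := mod_two_cases p (a.val + p - b.val) hp (by omega)
  have m1 : (b.val + p - a.val) % p < p := Nat.mod_lt _ hp
  have m2 : (a.val + p - b.val) % p < p := Nat.mod_lt _ hp
  have e1 : dd p a b = (b.val + p - a.val) % p := rfl
  have e2 : dd p b a = (a.val + p - b.val) % p := rfl
  have hbp : (b.val + p) % p = b.val := by
    rw [Nat.add_mod_right]; exact Nat.mod_eq_of_lt hb
  have hbb : b.val % p = b.val := Nat.mod_eq_of_lt hb
  refine ⟨by omega, by omega, ?_, by omega⟩
  rcases k1 with h | ⟨h, h'⟩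
  · have hx : a.val + dd p a b = b.val + p := by omega
    rw [hx, hbp]
  · have hx : a.val + dd p a b = b.val := by omega
    rw [hx, hbb]

def Phi (p q s : ℕ) : ((circGraph p q).subdiv s).V → ZMod (p*(2*s+1))
  | .inl u => (((2*s+1) * u.val : ℕ) : ZMod (p*(2*s+1)))
  | .inr (e, j) =>
      (((2*s+1) * e.1.1.val + (2*j.val+2) * (s*p + dd p e.1.1 e.1.2) : ℕ) : ZMod (p*(2*s+1)))

lemma phi_end_eq (p q s : ℕ) (hq : 0 < q) (hpq : 2*q < p) (hs : 1 ≤ s)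
    (e : {x : (circGraph p q).V × (circGraph p q).V // (circGraph p q).Adj x.1 x.2})
    (j : Fin s) (hj : j.val = s - 1) :
    Phi p q s (Sum.inl e.1.2) =
      Phi p q s (Sum.inr (e, j)) + ((s*p + dd p e.1.1 e.1.2 : ℕ) : ZMod (p*(2*s+1))) := by
  obtain ⟨⟨a, b⟩, hab⟩ := e
  obtain ⟨hd1, hd2, hd3, hd4⟩ := dd_spec p q hq hpq a b hab
  obtain ⟨c, hc⟩ : ∃ c, a.val + dd p a b = p * c + b.val :=
    ⟨(a.val + dd p a b)/p, by
      conv_lhs => rw [← Nat.div_add_mod (a.val + dd p a b) p]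
      rw [hd3]⟩
  simp only [Phi]
  have hj2 : 2*(j.val:ℕ)+2 = 2*s := by omega
  rw [hj2]
  have hP : ((p*(2*s+1) : ℕ) : ZMod (p*(2*s+1))) = 0 := ZMod.natCast_self _
  have hcz := congrArg (Nat.cast (R := ZMod (p*(2*s+1)))) hc
  push_cast at hP hcz ⊢
  linear_combination (-(2*(s:ZMod (p*(2*s+1)))+1)) * hcz +
    (-((s:ZMod (p*(2*s+1))) + (c:ZMod (p*(2*s+1))))) * hP


lemma phi_inner_eq (p q s : ℕ) (hq : 0 < q) (hpq : 2*q < p)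
    (a b : Fin p) (hab : (circGraph p q).Adj a b) (hba : (circGraph p q).Adj b a)
    (j j' : Fin s) :
    (j.val + j'.val + 2 = s →
      Phi p q s (Sum.inr (⟨(b,a),hba⟩, j')) =
        Phi p q s (Sum.inr (⟨(a,b),hab⟩, j)) +
          ((s*p + dd p a b : ℕ) : ZMod (p*(2*s+1)))) ∧
    (j.val + j'.val + 2 = s + 1 →
      Phi p q s (Sum.inr (⟨(b,a),hba⟩, j')) =
        Phi p q s (Sum.inr (⟨(a,b),hab⟩, j)) +
          ((s*p + dd p b a : ℕ) : ZMod (p*(2*s+1)))) := by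
  obtain ⟨hd1, hd2, hd3, hd4⟩ := dd_spec p q hq hpq a b hab
  obtain ⟨c, hc⟩ : ∃ c, a.val + dd p a b = p * c + b.val :=
    ⟨(a.val + dd p a b)/p, by
      conv_lhs => rw [← Nat.div_add_mod (a.val + dd p a b) p]
      rw [hd3]⟩
  have hP : ((p*(2*s+1) : ℕ) : ZMod (p*(2*s+1))) = 0 := ZMod.natCast_self _
  have hcz := congrArg (Nat.cast (R := ZMod (p*(2*s+1)))) hc
  have hD4z := congrArg (Nat.cast (R := ZMod (p*(2*s+1)))) hd4
  push_cast at hP hcz hD4z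
  constructor
  · intro h3
    have hjz := congrArg (Nat.cast (R := ZMod (p*(2*s+1)))) h3
    simp only [Phi]
    push_cast at hjz ⊢
    linear_combination (-(2*(s:ZMod (p*(2*s+1)))+1)) * hcz +
      (2*((j'.val:ZMod (p*(2*s+1))))+2) * hD4z +
      (-(2*(s:ZMod (p*(2*s+1)))*(p:ZMod (p*(2*s+1))) +
         2*((dd p a b : ℕ):ZMod (p*(2*s+1))))) * hjz +
      (2*((j'.val:ZMod (p*(2*s+1))))+2 - (s:ZMod (p*(2*s+1)))
         - (c:ZMod (p*(2*s+1)))) * hP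
  · intro h3
    have hjz := congrArg (Nat.cast (R := ZMod (p*(2*s+1)))) h3
    simp only [Phi]
    push_cast at hjz ⊢
    linear_combination (-(2*(s:ZMod (p*(2*s+1)))+1)) * hcz +
      (2*((j'.val:ZMod (p*(2*s+1))))+1) * hD4z +
      (-(2*(s:ZMod (p*(2*s+1)))*(p:ZMod (p*(2*s+1))) +
         2*((dd p a b : ℕ):ZMod (p*(2*s+1))))) * hjz +
      (2*((j'.val:ZMod (p*(2*s+1))))+1 - (s:ZMod (p*(2*s+1)))
         - (c:ZMod (p*(2*s+1)))) * hP

lemma step_lemma (p q s : ℕ) (hq : 0 < q) (hpq : 2*q < p) (hs : 1 ≤ s) :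
    ∀ x y, ((circGraph p q).subdiv s).Adj x y →
    ∃ t : ℕ, s*p + q ≤ t ∧ t + (s*p + q) ≤ p*(2*s+1) ∧
      (Phi p q s y = Phi p q s x + (t : ZMod (p*(2*s+1))) ∨
       Phi p q s x = Phi p q s y + (t : ZMod (p*(2*s+1)))) := by
  have hPe : p*(2*s+1) = s*p + (s*p + p) := by ring
  rintro (u | ⟨e, j⟩) (v | ⟨e', j'⟩) h
  · exact absurd h.1 (by omega)
  · -- inl u, inr (e', j') : u = e'.1.2, j' = s-1
    obtain ⟨rfl, hj⟩ := h
    obtain ⟨hd1, hd2, -, -⟩ := dd_spec p q hq hpq e'.1.1 e'.1.2 e'.2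
    exact ⟨s*p + dd p e'.1.1 e'.1.2, by omega, by omega,
      Or.inr (phi_end_eq p q s hq hpq hs e' j' hj)⟩
  · -- inr (e, j), inl v
    obtain ⟨rfl, hj⟩ := h
    obtain ⟨hd1, hd2, -, -⟩ := dd_spec p q hq hpq e.1.1 e.1.2 e.2
    exact ⟨s*p + dd p e.1.1 e.1.2, by omega, by omega,
      Or.inl (phi_end_eq p q s hq hpq hs e j hj)⟩
  · -- inner-inner
    obtain ⟨h1, h2, h3⟩ := h
    have hba : (circGraph p q).Adj e.1.2 e.1.1 := (circGraph p q).symm _ _ e.2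
    have he' : e' = ⟨(e.1.2, e.1.1), hba⟩ := Subtype.ext (Prod.ext h1 h2)
    subst he'
    obtain ⟨hd1, hd2, hd3, hd4⟩ := dd_spec p q hq hpq e.1.1 e.1.2 e.2
    obtain ⟨hd1', hd2', -, -⟩ := dd_spec p q hq hpq e.1.2 e.1.1 hba
    rcases h3 with h3 | h3
    · exact ⟨s*p + dd p e.1.1 e.1.2, by omega, by omega,
        Or.inl ((phi_inner_eq p q s hq hpq e.1.1 e.1.2 e.2 hba j j').1 h3)⟩
    · exact ⟨s*p + dd p e.1.2 e.1.1, by omega, by omega,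
        Or.inl ((phi_inner_eq p q s hq hpq e.1.1 e.1.2 e.2 hba j j').2 h3)⟩

end Aux
namespace Aux

lemma walk_sum (p q s : ℕ) (hq : 0 < q) (hpq : 2*q < p) (hs : 1 ≤ s) :
    ∀ n x y, ((circGraph p q).subdiv s).walkLen n x y →
    ∃ T : ℕ, n*(s*p + q) ≤ T ∧ T + n*(s*p + q) ≤ n*(p*(2*s+1)) ∧
      Phi p q s y = Phi p q s x + (T : ZMod (p*(2*s+1))) := by
  intro n
  induction n with
  | zero =>
      rintro x y rfl
      exact ⟨0, by omega, by omega, by simp⟩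
  | succ n ih =>
      rintro x y ⟨w, hxw, hwy⟩
      obtain ⟨t, ht1, ht2, ht3⟩ := step_lemma p q s hq hpq hs x w hxw
      obtain ⟨T, hT1, hT2, hT3⟩ := ih w y hwy
      have hstep : ∃ t' : ℕ, s*p + q ≤ t' ∧ t' + (s*p + q) ≤ p*(2*s+1) ∧
          Phi p q s w = Phi p q s x + (t' : ZMod (p*(2*s+1))) := by
        rcases ht3 with h | h
        · exact ⟨t, ht1, ht2, h⟩
        · refine ⟨p*(2*s+1) - t, by omega, by omega, ?_⟩
          have hcast : (((p*(2*s+1) - t : ℕ)) : ZMod (p*(2*s+1))) =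
              ((p*(2*s+1) : ℕ) : ZMod (p*(2*s+1))) - (t : ZMod (p*(2*s+1))) :=
            Nat.cast_sub (by omega)
          rw [hcast, ZMod.natCast_self, h]
          ring
      obtain ⟨t', h1, h2, h3⟩ := hstep
      refine ⟨t' + T, ?_, ?_, ?_⟩
      · have e : (n+1)*(s*p+q) = n*(s*p+q) + (s*p+q) := by ring
        omega
      · have e1 : (n+1)*(s*p+q) = n*(s*p+q) + (s*p+q) := by ring
        have e2 : (n+1)*(p*(2*s+1)) = n*(p*(2*s+1)) + (p*(2*s+1)) := by ring
        omega
      · rw [hT3, h3]; push_cast; ring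

lemma div_window (Q' : ℕ) (hQ' : 0 < Q') (a b : ℕ) (hab : a ≤ b)
    (hdiv : a / Q' = b / Q') : b - a < Q' := by
  have h1 := Nat.div_add_mod a Q'
  have h2 := Nat.div_add_mod b Q'
  rw [hdiv] at h1
  have h3 : a % Q' < Q' := Nat.mod_lt _ hQ'
  have h4 : b % Q' < Q' := Nat.mod_lt _ hQ'
  generalize Q' * (b / Q') = X at h1 h2
  omega

lemma power_hom (p q s r k Q' : ℕ) (hq : 0 < q) (hpq : 2*q < p) (hs : 1 ≤ s)
    (hQ' : 0 < Q')
    (hrel : (2*r+1)*(s*p+q) = r*(p*(2*s+1)) + Q')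
    (hPk : p*(2*s+1) ≤ k*Q') :
    (((circGraph p q).subdiv s).pow (2*r+1)).homTo (completeGraph k) := by
  haveI : NeZero (p*(2*s+1)) := ⟨Nat.mul_ne_zero (by omega) (by omega)⟩
  have hvlt : ∀ z : ZMod (p*(2*s+1)), z.val < p*(2*s+1) := fun z => ZMod.val_lt z
  refine ⟨fun x => ⟨(Phi p q s x).val / Q', ?_⟩, ?_⟩
  · rw [Nat.div_lt_iff_lt_mul hQ']
    exact lt_of_lt_of_le (hvlt _) hPk
  · intro x y hadj
    obtain ⟨T, hT1, hT2, hT3⟩ := walk_sum p q s hq hpq hs (2*r+1) x y hadj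
    have e2 : (2*r+1)*(p*(2*s+1)) = 2*(r*(p*(2*s+1))) + (p*(2*s+1)) := by ring
    set T' := T - r*(p*(2*s+1)) with hT'
    have hT'lo : Q' ≤ T' := by omega
    have hT'hi : T' + Q' ≤ p*(2*s+1) := by omega
    have hcastT : (T : ZMod (p*(2*s+1))) = ((T' : ℕ) : ZMod (p*(2*s+1))) := by
      have hTT : T = T' + r*(p*(2*s+1)) := by omega
      rw [hTT, Nat.cast_add, Nat.cast_mul, ZMod.natCast_self, mul_zero, add_zero]
    rw [hcastT] at hT3
    set u := (Phi p q s x).val with hu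
    set v := (Phi p q s y).val with hv
    have hvval : v = (u + T') % (p*(2*s+1)) := by
      have hTv : ((T' : ℕ) : ZMod (p*(2*s+1))).val = T' := by
        rw [ZMod.val_natCast]
        exact Nat.mod_eq_of_lt (by omega)
      rw [hv, hT3, ZMod.val_add, hTv]
    have hcases := mod_two_cases (p*(2*s+1)) (u + T') (by omega)
      (by have := hvlt (Phi p q s x); omega)
    intro heq
    have hdiv : u / Q' = v / Q' := by
      have := Fin.mk.injEq (u / Q') _ (v / Q') _ ▸ heq
      exact Fin.val_eq_of_eq heq
    have hu' := hvlt (Phi p q s x)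
    have hv' := hvlt (Phi p q s y)
    rcases hcases with h | ⟨h, h'⟩
    · have : v - u < Q' := div_window Q' hQ' u v (by omega) hdiv
      omega
    · have : u - v < Q' := div_window Q' hQ' v u (by omega) hdiv.symm
      omega

end Aux
open Aux in
/-- For `p/q > 2` with `q ∤ p`, `θ(K_{p/q}) > 1`. -/
theorem powerThickness_circ_gt_one (p q : ℕ) (hq : 0 < q)
    (h2 : 2 < (p : ℚ) / (q : ℚ)) (hnd : ¬ q ∣ p) :
    1 < (circGraph p q).powerThickness 0 := by
  have hq0 : (0:ℚ) < q := by exact_mod_cast hq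
  have hpq : 2*q < p := by
    have h := (lt_div_iff₀ hq0).1 h2
    exact_mod_cast h
  set k := p / q + 1 with hk
  set s := k * p with hs
  set r := s + 1 with hr
  have hp0 : 0 < p := by omega
  have hk3 : 3 ≤ k := by
    have h22 : 2*q ≤ p := by omega
    have := (Nat.le_div_iff_mul_le hq).2 h22
    omega
  have hkq : p + 1 ≤ q * k := by
    have h1 := Nat.div_add_mod p q
    have h2' : p % q < q := Nat.mod_lt _ hq
    have h3 : q * k = q * (p/q) + q := by rw [hk]; ring
    omega
  have hs1 : 1 ≤ s := by
    have h1 : 1*1 ≤ k*p := Nat.mul_le_mul (by omega) (by omega)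
    omega
  set Q' := (2*s+3)*q - p with hQ'
  have hQ'big : p + 1 ≤ (2*s+3)*q := by
    have h1 : p + 1 ≤ 2*s+3 := by
      have h0 : 3*p ≤ k*p := Nat.mul_le_mul_right p hk3
      omega
    calc p + 1 ≤ (2*s+3) * 1 := by omega
      _ ≤ (2*s+3)*q := Nat.mul_le_mul_left _ hq
  have hQ'pos : 0 < Q' := by omega
  have hiden : (2*r+1)*(s*p+q) + p = r*(p*(2*s+1)) + (2*s+3)*q := by rw [hr]; ring
  have hrelQ : (2*r+1)*(s*p+q) = r*(p*(2*s+1)) + Q' := by omega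
  have hPk : p*(2*s+1) ≤ k*Q' := by
    have h1 : k*Q' + k*p = k*((2*s+3)*q) := by
      have h0 : Q' + p = (2*s+3)*q := by omega
      calc k*Q' + k*p = k*(Q' + p) := by ring
        _ = k*((2*s+3)*q) := by rw [h0]
    have h2' : (p+1)*(2*s+3) ≤ (q*k)*(2*s+3) := Nat.mul_le_mul_right _ hkq
    have h3 : k*((2*s+3)*q) = (q*k)*(2*s+3) := by ring
    have h4 : (p+1)*(2*s+3) = p*(2*s+1) + (2*p + 2*s + 3) := by ring
    have h5 : k*p ≤ 2*s := by omega
    omega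
  -- chromatic facts
  have hchrompow : (((circGraph p q).subdiv s).pow (2*r+1)).chromatic ≤ k :=
    Nat.sInf_le (power_hom p q s r k Q' hq hpq hs1 hQ'pos hrelQ hPk)
  have hchromG : k ≤ (circGraph p q).chromatic := by
    have hne : (circGraph p q).homTo (completeGraph p) := by
      refine ⟨id, fun u v huv he => ?_⟩
      obtain ⟨h1, -⟩ := (circ_adj_iff p q u v).1 huv
      have he' : u = v := he
      subst he'
      simp at h1
      omega
    have hmem := Nat.sInf_mem (⟨p, hne⟩ :
      Set.Nonempty {m | (circGraph p q).homTo (completeGraph m)})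
    have hlow := circ_chrom_lower p q hq hpq hnd _ hmem
    have hce : (circGraph p q).chromatic =
        sInf {m | (circGraph p q).homTo (completeGraph m)} := rfl
    omega
  have hchromZ : (((((circGraph p q).subdiv s).pow (2*r+1)).chromatic : ℤ)) ≤
      ((circGraph p q).chromatic : ℤ) + 0 := by
    rw [add_zero]
    exact_mod_cast le_trans hchrompow hchromG
  -- odd girth condition
  have hog : (circGraph p q).ltOddGirth ((2*(r:ℚ)+1)/(2*(s:ℚ)+1)) := by
    rintro n hodd ⟨v, hwalk⟩
    have hn1 : n ≠ 1 := by
      rintro rfl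
      obtain ⟨w, hadj, rfl⟩ := hwalk
      obtain ⟨hh1, -⟩ := (circ_adj_iff p q _ _).1 hadj
      simp at hh1
      omega
    have hn3 : 3 ≤ n := by
      rcases hodd with ⟨m, hm⟩
      omega
    show (2*(r:ℚ)+1)/(2*(s:ℚ)+1) < n
    rw [div_lt_iff₀ (by positivity)]
    have hcomp : (2*r+1 : ℕ) < n * (2*s+1) := by
      have h1 : 3*(2*s+1) ≤ n*(2*s+1) := Nat.mul_le_mul_right _ hn3
      have h2' : 3*(2*s+1) = 6*s+3 := by ring
      omega
    exact_mod_cast hcomp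
  -- supremum
  rw [powerThickness]
  have hmem : (2*(r:ℝ)+1)/(2*(s:ℝ)+1) ∈ {x : ℝ | ∃ r' s' : ℕ,
      x = (2*(r':ℝ)+1)/(2*(s':ℝ)+1) ∧
      (((((circGraph p q).subdiv s').pow (2*r'+1)).chromatic : ℤ) ≤
        ((circGraph p q).chromatic : ℤ) + 0) ∧
      (circGraph p q).ltOddGirth ((2*(r':ℚ)+1)/(2*(s':ℚ)+1))} :=
    ⟨r, s, rfl, hchromZ, hog⟩
  have hbdd : BddAbove {x : ℝ | ∃ r' s' : ℕ,
      x = (2*(r':ℝ)+1)/(2*(s':ℝ)+1) ∧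
      (((((circGraph p q).subdiv s').pow (2*r'+1)).chromatic : ℤ) ≤
        ((circGraph p q).chromatic : ℤ) + 0) ∧
      (circGraph p q).ltOddGirth ((2*(r':ℚ)+1)/(2*(s':ℚ)+1))} := by
    refine ⟨(2*(p:ℝ)+1), ?_⟩
    rintro x ⟨r', s', rfl, -, hog'⟩
    obtain ⟨v, hwalk⟩ := circ_odd_walk p q hq hpq
    have hlt := hog' (2*p+1) ⟨p, by ring⟩ ⟨v, hwalk⟩
    have hle := (Rat.cast_le (K := ℝ)).2 hlt.le
    push_cast at hle
    exact hle
  have hgt : (1:ℝ) < (2*(r:ℝ)+1)/(2*(s:ℝ)+1) := by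
    rw [lt_div_iff₀ (by positivity)]
    have hnat : 1*(2*s+1) < 2*r+1 := by omega
    exact_mod_cast hnat
  exact lt_of_lt_of_le hgt (le_csSup hbdd hmem)
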